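/- Let (θ_k)_{k≥1} be a sequence in a complete metric space whose consecutive distances are given by the residuals, i.e., dist(θ_k, θ_{k+1}) = Δ_{k+1} for all k ≥ 1. Suppose that both condition C1 and condition C2 hold at infinitely many iterations. Then (θ_k) is a Cauchy sequence and hence converges to a limit point θ* in the space. -/

import Mathlib

/-- **Proposition 1 of the paper.** Let `(θ k)` be a sequence in a complete
metric space with `dist (θ k) (θ (k+1)) = Δ (k+1)` for all `k ≥ 1`. If both conditions
`C1` and `C2` hold at infinitely many iterations (case `S3`), then `(θ k)` is Cauchy and
hence converges to some limit `θ*`. -/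
theorem iterates_converge_case_S3
    {X : Type*} [MetricSpace X] [CompleteSpace X]
    (Δ ρ : ℕ → ℝ) (γ η c : ℝ) (θ : ℕ → X)
    (hΔpos : ∀ k, 1 ≤ k → 0 < Δ k) (hρpos : ∀ k, 1 ≤ k → 0 < ρ k)
    (hγ : 1 < γ) (hη0 : 0 < η) (hη1 : η < 1) (hc : 0 < c)
    (hrule1 : ∀ k, 1 ≤ k → η * Δ k ≤ Δ (k + 1) → ρ (k + 1) = γ * ρ k)
    (hrule2 : ∀ k, 1 ≤ k → Δ (k + 1) < η * Δ k → ρ (k + 1) = ρ k)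
    (hlem : ∀ k, 1 ≤ k → η * Δ k ≤ Δ (k + 1) → Δ (k + 1) ≤ c / Real.sqrt (ρ k))
    (hθ : ∀ k, 1 ≤ k → dist (θ k) (θ (k + 1)) = Δ (k + 1))
    (hinf1 : {k : ℕ | 1 ≤ k ∧ η * Δ k ≤ Δ (k + 1)}.Infinite)
    (hinf2 : {k : ℕ | 1 ≤ k ∧ Δ (k + 1) < η * Δ k}.Infinite) :
    CauchySeq θ ∧ ∃ θstar : X, Filter.Tendsto θ Filter.atTop (nhds θstar) := by
  have hγ0 : (0:ℝ) < γ := lt_trans one_pos hγ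
  have hsγ : 1 < Real.sqrt γ := by
    have := Real.sqrt_lt_sqrt (by norm_num : (0:ℝ) ≤ 1) hγ
    simpa using this
  set q : ℝ := (Real.sqrt γ)⁻¹ with hq
  have hq0 : 0 < q := inv_pos.mpr (lt_trans one_pos hsγ)
  have hq1 : q < 1 := by
    rw [hq]; exact inv_lt_one_of_one_lt₀ hsγ
  have hη' : (0:ℝ) < 1 - η := by linarith
  have hq' : (0:ℝ) < 1 - q := by linarith
  set A : ℝ := 1 / ((1 - η) * (1 - q)) with hA
  have hApos : 0 < A := by positivity
  have hAid : A * ((1 - η) * (1 - q)) = 1 := by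
    rw [hA]; field_simp
  set V : ℕ → ℝ := fun k => (η / (1 - η)) * Δ (k + 1) + A * (c / Real.sqrt (ρ (k + 1)))
    with hV
  have hVnonneg : ∀ k, 1 ≤ k → 0 ≤ V k := by
    intro k hk
    have h1 : 0 < Δ (k + 1) := hΔpos _ (by omega)
    have h2 : 0 < Real.sqrt (ρ (k + 1)) := Real.sqrt_pos.mpr (hρpos _ (by omega))
    have : 0 < c / Real.sqrt (ρ (k + 1)) := by positivity
    have : 0 < η / (1 - η) := by positivity
    simp only [hV]
    positivity
  have key : ∀ k, 1 ≤ k → Δ (k + 1 + 1) + V (k + 1) ≤ V k := by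
    intro k hk
    have hk1 : 1 ≤ k + 1 := by omega
    have hΔ1 : 0 < Δ (k + 1) := hΔpos _ (by omega)
    have hρ1 : 0 < ρ (k + 1) := hρpos _ hk1
    have hs1 : 0 < Real.sqrt (ρ (k + 1)) := Real.sqrt_pos.mpr hρ1
    simp only [hV]
    rcases le_or_gt (η * Δ (k + 1)) (Δ (k + 1 + 1)) with hC | hC
    · -- C1 at k+1
      have h1 : Δ (k + 1 + 1) ≤ c / Real.sqrt (ρ (k + 1)) := hlem (k + 1) hk1 hC
      have h2 : ρ (k + 1 + 1) = γ * ρ (k + 1) := hrule1 (k + 1) hk1 hC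
      have hg : c / Real.sqrt (ρ (k + 1 + 1)) = q * (c / Real.sqrt (ρ (k + 1))) := by
        rw [h2, Real.sqrt_mul hγ0.le, hq]
        have hsg : Real.sqrt γ ≠ 0 := by positivity
        field_simp
      rw [hg]
      set g : ℝ := c / Real.sqrt (ρ (k + 1)) with hgdef
      have hgpos : 0 < g := by positivity
      have ht : 1 + η / (1 - η) = A * (1 - q) := by
        rw [hA]; field_simp; ring
      have F3 : (1 + η / (1 - η)) * g = A * (1 - q) * g := by rw [ht]
      have F2 : (1 + η / (1 - η)) * Δ (k + 1 + 1) ≤ (1 + η / (1 - η)) * g :=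
        mul_le_mul_of_nonneg_left h1 (by positivity)
      have F4 : 0 ≤ η / (1 - η) * Δ (k + 1) :=
        mul_nonneg (div_nonneg hη0.le hη'.le) hΔ1.le
      nlinarith [F2, F3, F4]
    · -- C2 at k+1
      have h2 : ρ (k + 1 + 1) = ρ (k + 1) := hrule2 (k + 1) hk1 hC
      rw [h2]
      have hle : Δ (k + 1 + 1) ≤ η * Δ (k + 1) := le_of_lt hC
      have ht3 : (1 + η / (1 - η)) * η = η / (1 - η) := by
        field_simp; ring
      have F3 : (1 + η / (1 - η)) * η * Δ (k + 1) = η / (1 - η) * Δ (k + 1) := by rw [ht3]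
      have F2 : (1 + η / (1 - η)) * Δ (k + 1 + 1) ≤ (1 + η / (1 - η)) * (η * Δ (k + 1)) :=
        mul_le_mul_of_nonneg_left hle (by positivity)
      nlinarith [F2, F3]
  -- telescoping
  have tele : ∀ n : ℕ, (∑ i ∈ Finset.range n, Δ (i + 1 + 1 + 1)) + V (n + 1) ≤ V 1 := by
    intro n
    induction n with
    | zero => simp
    | succ n ih =>
      rw [Finset.sum_range_succ]
      have := key (n + 1) (by omega)
      linarith
  have hsumbound : ∀ n : ℕ, (∑ i ∈ Finset.range n, dist (θ (i + 2)) (θ (i + 2 + 1))) ≤ V 1 := by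
    intro n
    have heq : ∀ i : ℕ, dist (θ (i + 2)) (θ (i + 2 + 1)) = Δ (i + 1 + 1 + 1) := by
      intro i
      have := hθ (i + 2) (by omega)
      simpa [show i + 2 + 1 = i + 1 + 1 + 1 by omega, show i + 2 = i + 1 + 1 by omega] using this
    calc (∑ i ∈ Finset.range n, dist (θ (i + 2)) (θ (i + 2 + 1)))
        = ∑ i ∈ Finset.range n, Δ (i + 1 + 1 + 1) := Finset.sum_congr rfl fun i _ => heq i
      _ ≤ V 1 := by have := tele n; have := hVnonneg (n + 1) (by omega); linarith
  have hsum2 : Summable (fun n : ℕ => dist (θ (n + 2)) (θ (n + 2 + 1))) :=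
    summable_of_sum_range_le (fun n => dist_nonneg) hsumbound
  have hsum : Summable (fun n : ℕ => dist (θ n) (θ (n + 1))) :=
    (summable_nat_add_iff (f := fun n : ℕ => dist (θ n) (θ (n + 1))) 2).mp hsum2
  have hcauchy : CauchySeq θ := cauchySeq_of_summable_dist hsum
  exact ⟨hcauchy, cauchySeq_tendsto_of_complete hcauchy⟩
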